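/- Let μ be a probability measure on ℝ with positive density and finite isoperimetric constant Is(μ) > 0, and let p be an odd positive integer with p ≥ 3. If u ∈ L_p(μ) is absolutely continuous with E[u^p] = 0, then ‖u‖_p ≤ 2p · Is(μ)⁻¹ · ‖u'‖_p. -/

import Mathlib

open MeasureTheory Set ENNReal

open Filter

/-- The distribution function of a measure on `ℝ`. -/
noncomputable def cdf (μ : MeasureTheory.Measure ℝ) (x : ℝ) : ℝ := (μ (Set.Iic x)).toReal

/-- The one-dimensional isoperimetric constant `Is(μ)`. -/
noncomputable def isopConst (μ : MeasureTheory.Measure ℝ) (f : ℝ → ℝ) : ℝ :=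
  essInf (fun x => f x / min (cdf μ x) (1 - cdf μ x))
    (volume.restrict {x : ℝ | 0 < cdf μ x ∧ cdf μ x < 1})

lemma exists_median (μ : Measure ℝ) [IsProbabilityMeasure μ]
    (hc : Continuous fun x => (μ (Iic x)).toReal) :
    ∃ m : ℝ, μ (Iic m) = ENNReal.ofReal (1/2) := by
  have hF : (fun x => (μ (Iic x)).toReal) = (ProbabilityTheory.cdf μ : ℝ → ℝ) := by
    funext x; rw [ProbabilityTheory.cdf_eq_real, measureReal_def]
  have h0 : Tendsto (fun x => (μ (Iic x)).toReal) atBot (nhds 0) := by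
    rw [hF]; exact ProbabilityTheory.tendsto_cdf_atBot μ
  have h1 : Tendsto (fun x => (μ (Iic x)).toReal) atTop (nhds 1) := by
    rw [hF]; exact ProbabilityTheory.tendsto_cdf_atTop μ
  obtain ⟨a, ha⟩ := (h0.eventually (eventually_lt_nhds (by norm_num : (0:ℝ) < 1/2))).exists
  obtain ⟨b, hb⟩ := (h1.eventually (eventually_gt_nhds (by norm_num : (1/2:ℝ) < 1))).exists
  obtain ⟨m, hm⟩ := intermediate_value_univ a b hc ⟨ha.le, hb.le⟩
  refine ⟨m, ?_⟩
  rw [← hm, ENNReal.ofReal_toReal (measure_ne_top μ _)]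


lemma cdf_cont (μ : Measure ℝ) [IsProbabilityMeasure μ] (h0 : ∀ x : ℝ, μ {x} = 0) :
    Continuous fun x => (μ (Iic x)).toReal := by
  have hF : (fun x => (μ (Iic x)).toReal) = (ProbabilityTheory.cdf μ : ℝ → ℝ) := by
    funext x; rw [ProbabilityTheory.cdf_eq_real, measureReal_def]
  rw [hF]
  set F := ProbabilityTheory.cdf μ
  refine continuous_iff_continuousAt.2 fun x => ?_
  have hmono : Monotone F := F.mono
  rw [hmono.continuousAt_iff_leftLim_eq_rightLim]
  have hr : Function.rightLim F x = F x := F.rightLim_eq x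
  have hs : F.measure {x} = 0 := by rw [ProbabilityTheory.measure_cdf]; exact h0 x
  rw [F.measure_singleton] at hs
  have hle : Function.leftLim F x ≤ F x := hmono.leftLim_le le_rfl
  have : F x - Function.leftLim F x = 0 := by
    have h1 := ENNReal.ofReal_eq_zero.1 hs
    linarith
  rw [hr]; linarith



lemma ftc_bound (φ φ' : ℝ → ℝ) (hd : ∀ x, HasDerivAt φ (φ' x) x) (a b : ℝ) (hab : a ≤ b) :
    ENNReal.ofReal |φ b - φ a| ≤ ∫⁻ t in Icc a b, ENNReal.ofReal |φ' t| ∂volume := by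
  have hφ'm : Measurable φ' := by
    have : φ' = deriv φ := funext fun x => ((hd x).deriv).symm
    rw [this]; exact measurable_deriv φ
  by_cases htop : (∫⁻ t in Icc a b, ENNReal.ofReal |φ' t| ∂volume) = ⊤
  · rw [htop]; exact le_top
  · have hfi : IntegrableOn φ' (Icc a b) volume := by
      refine ⟨hφ'm.aestronglyMeasurable, ?_⟩
      rw [hasFiniteIntegral_iff_norm]
      simpa only [Real.norm_eq_abs] using Ne.lt_top htop
    have hii : IntervalIntegrable φ' volume a b :=
      (intervalIntegrable_iff_integrableOn_Icc_of_le hab).2 hfi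
    have hftc : ∫ y in a..b, φ' y = φ b - φ a :=
      intervalIntegral.integral_eq_sub_of_hasDerivAt (fun x _ => hd x) hii
    have h1 : |φ b - φ a| ≤ ∫ y in Icc a b, |φ' y| := by
      rw [← hftc]
      refine (intervalIntegral.abs_integral_le_integral_abs hab).trans ?_
      rw [intervalIntegral.integral_of_le hab]
      exact setIntegral_mono_set hfi.abs (ae_of_all _ fun y => abs_nonneg _)
        Ioc_subset_Icc_self.eventuallyLE
    calc ENNReal.ofReal |φ b - φ a| ≤ ENNReal.ofReal (∫ y in Icc a b, |φ' y|) :=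
          ENNReal.ofReal_le_ofReal h1
      _ = ∫⁻ t in Icc a b, ENNReal.ofReal |φ' t| ∂volume := by
          rw [ofReal_integral_eq_lintegral_ofReal hfi.abs (ae_of_all _ fun y => abs_nonneg _)]


lemma tonelli_right (g W : ℝ → ℝ≥0∞) (hg : Measurable g) (hW : Measurable W) (m₀ : ℝ) :
    ∫⁻ x in Ici m₀, (∫⁻ t in Icc m₀ x, W t ∂volume) * g x ∂volume
      = ∫⁻ t in Ici m₀, W t * (∫⁻ x in Ici t, g x ∂volume) ∂volume := by
  set s : Set (ℝ × ℝ) := {q : ℝ × ℝ | m₀ ≤ q.2 ∧ q.2 ≤ q.1} with hs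
  have hsm : MeasurableSet s := by
    apply MeasurableSet.inter
    · exact measurable_snd measurableSet_Ici
    · exact measurableSet_le measurable_snd measurable_fst
  set k : ℝ × ℝ → ℝ≥0∞ := s.indicator (fun q => W q.2 * g q.1) with hk
  have hkm : Measurable k := ((hW.comp measurable_snd).mul (hg.comp measurable_fst)).indicator hsm
  have step1 : ∀ x : ℝ, (∫⁻ t, k (x, t) ∂volume) = (∫⁻ t in Icc m₀ x, W t ∂volume) * g x := by
    intro x
    have : ∀ t, k (x, t) = (Icc m₀ x).indicator (fun t => W t * g x) t := by
      intro t
      by_cases h : t ∈ Icc m₀ x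
      · rw [Set.indicator_of_mem h, hk, Set.indicator_of_mem]
        exact ⟨h.1, h.2⟩
      · rw [Set.indicator_of_notMem h, hk, Set.indicator_of_notMem]
        rw [mem_Icc] at h
        exact fun hc => h ⟨hc.1, hc.2⟩
    simp_rw [this]
    rw [lintegral_indicator measurableSet_Icc _]
    exact lintegral_mul_const _ hW
  have step2 : ∀ t : ℝ, (∫⁻ x, k (x, t) ∂volume)
      = (Ici m₀).indicator (fun t => W t * (∫⁻ x in Ici t, g x ∂volume)) t := by
    intro t
    by_cases hm : m₀ ≤ t
    · have : ∀ x, k (x, t) = (Ici t).indicator (fun x => W t * g x) x := by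
        intro x
        by_cases h : x ∈ Ici t
        · rw [Set.indicator_of_mem h, hk, Set.indicator_of_mem (show (x,t) ∈ s from ⟨hm, h⟩)]
        · rw [Set.indicator_of_notMem h, hk, Set.indicator_of_notMem]
          exact fun hc => h hc.2
      simp_rw [this]
      rw [lintegral_indicator measurableSet_Ici _, Set.indicator_of_mem (mem_Ici.mpr hm),
        lintegral_const_mul _ hg]
    · have : ∀ x, k (x, t) = 0 := by
        intro x
        rw [hk, Set.indicator_of_notMem]
        exact fun hc => hm hc.1
      simp_rw [this]
      rw [Set.indicator_of_notMem (by simpa using hm), lintegral_zero]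
  have swap : ∫⁻ x, ∫⁻ t, k (x, t) ∂volume ∂volume = ∫⁻ t, ∫⁻ x, k (x, t) ∂volume ∂volume :=
    lintegral_lintegral_swap (hkm.aemeasurable)
  calc ∫⁻ x in Ici m₀, (∫⁻ t in Icc m₀ x, W t ∂volume) * g x ∂volume
      = ∫⁻ x, (∫⁻ t in Icc m₀ x, W t ∂volume) * g x ∂volume := by
        rw [← lintegral_indicator measurableSet_Ici _]
        refine lintegral_congr fun x => ?_
        by_cases h : x ∈ Ici m₀
        · rw [Set.indicator_of_mem h]
        · rw [Set.indicator_of_notMem h]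
          rw [mem_Ici, not_le] at h
          rw [Icc_eq_empty h.not_ge]
          simp
    _ = ∫⁻ x, ∫⁻ t, k (x, t) ∂volume ∂volume := by simp_rw [step1]
    _ = ∫⁻ t, ∫⁻ x, k (x, t) ∂volume ∂volume := swap
    _ = ∫⁻ t, (Ici m₀).indicator (fun t => W t * (∫⁻ x in Ici t, g x ∂volume)) t ∂volume := by
        simp_rw [step2]
    _ = ∫⁻ t in Ici m₀, W t * (∫⁻ x in Ici t, g x ∂volume) ∂volume := by
        rw [lintegral_indicator measurableSet_Ici _]


lemma tonelli_left (g W : ℝ → ℝ≥0∞) (hg : Measurable g) (hW : Measurable W) (m₀ : ℝ) :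
    ∫⁻ x in Iic m₀, (∫⁻ t in Icc x m₀, W t ∂volume) * g x ∂volume
      = ∫⁻ t in Iic m₀, W t * (∫⁻ x in Iic t, g x ∂volume) ∂volume := by
  set s : Set (ℝ × ℝ) := {q : ℝ × ℝ | q.1 ≤ q.2 ∧ q.2 ≤ m₀} with hs
  have hsm : MeasurableSet s := by
    apply MeasurableSet.inter
    · exact measurableSet_le measurable_fst measurable_snd
    · exact measurable_snd measurableSet_Iic
  set k : ℝ × ℝ → ℝ≥0∞ := s.indicator (fun q => W q.2 * g q.1) with hk
  have hkm : Measurable k := ((hW.comp measurable_snd).mul (hg.comp measurable_fst)).indicator hsm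
  have step1 : ∀ x : ℝ, (∫⁻ t, k (x, t) ∂volume) = (∫⁻ t in Icc x m₀, W t ∂volume) * g x := by
    intro x
    have : ∀ t, k (x, t) = (Icc x m₀).indicator (fun t => W t * g x) t := by
      intro t
      by_cases h : t ∈ Icc x m₀
      · rw [Set.indicator_of_mem h, hk, Set.indicator_of_mem (show (x,t) ∈ s from ⟨h.1, h.2⟩)]
      · rw [Set.indicator_of_notMem h, hk, Set.indicator_of_notMem]
        rw [mem_Icc] at h
        exact fun hc => h ⟨hc.1, hc.2⟩
    simp_rw [this]
    rw [lintegral_indicator measurableSet_Icc _]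
    exact lintegral_mul_const _ hW
  have step2 : ∀ t : ℝ, (∫⁻ x, k (x, t) ∂volume)
      = (Iic m₀).indicator (fun t => W t * (∫⁻ x in Iic t, g x ∂volume)) t := by
    intro t
    by_cases hm : t ≤ m₀
    · have : ∀ x, k (x, t) = (Iic t).indicator (fun x => W t * g x) x := by
        intro x
        by_cases h : x ∈ Iic t
        · rw [Set.indicator_of_mem h, hk, Set.indicator_of_mem (show (x,t) ∈ s from ⟨h, hm⟩)]
        · rw [Set.indicator_of_notMem h, hk, Set.indicator_of_notMem]
          exact fun hc => h hc.1
      simp_rw [this]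
      rw [lintegral_indicator measurableSet_Iic _, Set.indicator_of_mem (mem_Iic.mpr hm),
        lintegral_const_mul _ hg]
    · have : ∀ x, k (x, t) = 0 := by
        intro x
        rw [hk, Set.indicator_of_notMem]
        exact fun hc => hm hc.2
      simp_rw [this]
      rw [Set.indicator_of_notMem (by simpa using hm), lintegral_zero]
  have swap : ∫⁻ x, ∫⁻ t, k (x, t) ∂volume ∂volume = ∫⁻ t, ∫⁻ x, k (x, t) ∂volume ∂volume :=
    lintegral_lintegral_swap (hkm.aemeasurable)
  calc ∫⁻ x in Iic m₀, (∫⁻ t in Icc x m₀, W t ∂volume) * g x ∂volume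
      = ∫⁻ x, (∫⁻ t in Icc x m₀, W t ∂volume) * g x ∂volume := by
        rw [← lintegral_indicator measurableSet_Iic _]
        refine lintegral_congr fun x => ?_
        by_cases h : x ∈ Iic m₀
        · rw [Set.indicator_of_mem h]
        · rw [Set.indicator_of_notMem h]
          rw [mem_Iic, not_le] at h
          rw [Icc_eq_empty h.not_ge]
          simp
    _ = ∫⁻ x, ∫⁻ t, k (x, t) ∂volume ∂volume := by simp_rw [step1]
    _ = ∫⁻ t, ∫⁻ x, k (x, t) ∂volume ∂volume := swap
    _ = ∫⁻ t, (Iic m₀).indicator (fun t => W t * (∫⁻ x in Iic t, g x ∂volume)) t ∂volume := by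
        simp_rw [step2]
    _ = ∫⁻ t in Iic m₀, W t * (∫⁻ x in Iic t, g x ∂volume) ∂volume := by
        rw [lintegral_indicator measurableSet_Iic _]

lemma ennreal_le_inv_mul {c a b : ℝ≥0∞} (hc0 : c ≠ 0) (hct : c ≠ ⊤) (h : c * a ≤ b) :
    a ≤ c⁻¹ * b := by
  calc a = c⁻¹ * (c * a) := by rw [← mul_assoc, ENNReal.inv_mul_cancel hc0 hct, one_mul]
    _ ≤ c⁻¹ * b := mul_le_mul_right h _

lemma ofReal_abs_rpow (a : ℝ) (p : ℕ) : ((‖a‖₊ : ℝ≥0∞)) ^ (p:ℝ) = ENNReal.ofReal (|a|^p) := by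
  rw [← enorm_eq_nnnorm, ← ofReal_norm, ENNReal.ofReal_rpow_of_nonneg (norm_nonneg a) (by positivity),
    Real.norm_eq_abs, Real.rpow_natCast]

lemma eLpNorm_nat (μ : Measure ℝ) (v : ℝ → ℝ) (p : ℕ) (hp : 0 < p) :
    eLpNorm v p μ = (∫⁻ x, ENNReal.ofReal (|v x| ^ p) ∂μ) ^ (1/(p:ℝ)) := by
  rw [eLpNorm_eq_lintegral_rpow_enorm_toReal (by exact_mod_cast hp.ne') (by simp)]
  congr 1
  · refine lintegral_congr fun x => ?_
    rw [show ((p:ℝ≥0∞)).toReal = (p:ℝ) by simp, enorm_eq_nnnorm, ofReal_abs_rpow]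

theorem core_lemma (μ : Measure ℝ) [IsProbabilityMeasure μ] (g : ℝ → ℝ≥0∞) (hgm : Measurable g)
    (hμg : μ = volume.withDensity g) (Is : ℝ) (hIs : 0 < Is)
    (hbound : ∀ᵐ x ∂(volume : Measure ℝ), ENNReal.ofReal Is * min (μ (Iic x)) (μ (Ioi x)) ≤ g x)
    (p : ℕ) (hp3 : 3 ≤ p) (m₀ : ℝ) (hm : μ (Iic m₀) = ENNReal.ofReal (1/2))
    (u u' : ℝ → ℝ) (hud : ∀ x, HasDerivAt u (u' x) x)
    (hh : MemLp (fun x => u x - u m₀) p μ) :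
    eLpNorm (fun x => u x - u m₀) (p : ℝ≥0∞) μ
      ≤ ENNReal.ofReal ((p:ℝ) * Is⁻¹) * eLpNorm u' (p : ℝ≥0∞) μ := by
  have hp0 : 0 < p := by omega
  have hp1R : (1:ℝ) < (p:ℝ) := by exact_mod_cast lt_of_lt_of_le (by norm_num) hp3
  set c := u m₀ with hc
  have hucont : Continuous u := continuous_iff_continuousAt.2 fun x => (hud x).continuousAt
  have hum : Measurable u := hucont.measurable
  have hu'm : Measurable u' := by
    have : u' = deriv u := funext fun x => ((hud x).deriv).symm
    rw [this]; exact measurable_deriv u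
  set W : ℝ → ℝ≥0∞ := fun t => ENNReal.ofReal ((p:ℝ) * |u t - c|^(p-1) * |u' t|) with hW
  have hWm : Measurable W :=
    ((measurable_const.mul ((hum.sub_const c).abs.pow_const (p-1))).mul hu'm.abs).ennreal_ofReal
  set V : ℝ → ℝ≥0∞ := fun x => ENNReal.ofReal (|u x - c|^p) with hV
  have hVm : Measurable V := ((hum.sub_const c).abs.pow_const p).ennreal_ofReal
  -- derivative of (u - c)^p
  set φ : ℝ → ℝ := fun y => (u y - c)^p with hφ
  set φ' : ℝ → ℝ := fun y => (p:ℝ) * (u y - c)^(p-1) * u' y with hφ'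
  have hd : ∀ x, HasDerivAt φ (φ' x) x := fun x => ((hud x).sub_const c).pow p
  have habs : ∀ t, ENNReal.ofReal |φ' t| = W t := by
    intro t
    rw [hφ', hW]
    congr 1
    rw [abs_mul, abs_mul, abs_pow, Nat.abs_cast]
  have hμs : ∀ t : ℝ, μ {t} = 0 := by
    intro t
    rw [hμg, withDensity_apply _ (measurableSet_singleton t),
      Measure.restrict_eq_zero.2 (by simp), lintegral_zero_measure]
  haveI : NoAtoms μ := ⟨hμs⟩
  -- measure facts
  have h_Ici_eq : ∀ t : ℝ, μ (Ici t) = μ (Ioi t) := by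
    intro t
    refine le_antisymm ?_ (measure_mono Ioi_subset_Ici_self)
    calc μ (Ici t) = μ ({t} ∪ Ioi t) := by rw [← Set.Ioi_insert, Set.insert_eq]
      _ ≤ μ {t} + μ (Ioi t) := measure_union_le _ _
      _ = μ (Ioi t) := by rw [hμs t, zero_add]
  have h_half : (1 : ℝ≥0∞) - ENNReal.ofReal (1/2) = ENNReal.ofReal (1/2) := by
    rw [← ENNReal.ofReal_one, ← ENNReal.ofReal_sub _ (by norm_num)]; norm_num
  have h_Ioi : ∀ t : ℝ, μ (Ioi t) = 1 - μ (Iic t) := by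
    intro t
    rw [← Set.compl_Iic, measure_compl measurableSet_Iic (measure_ne_top μ _), measure_univ]
  have hminR : ∀ t : ℝ, m₀ ≤ t → min (μ (Iic t)) (μ (Ioi t)) = μ (Ioi t) := by
    intro t ht
    refine min_eq_right ?_
    have h1 : ENNReal.ofReal (1/2) ≤ μ (Iic t) := hm ▸ measure_mono (Iic_subset_Iic.2 ht)
    rw [h_Ioi t]
    exact le_trans (tsub_le_tsub_left h1 1) (le_trans h_half.le h1)
  have hminL : ∀ t : ℝ, t ≤ m₀ → min (μ (Iic t)) (μ (Ioi t)) = μ (Iic t) := by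
    intro t ht
    refine min_eq_left ?_
    have h1 : μ (Iic t) ≤ ENNReal.ofReal (1/2) := hm ▸ measure_mono (Iic_subset_Iic.2 ht)
    have h2 : ENNReal.ofReal (1/2) ≤ μ (Ioi t) := by
      refine le_trans ?_ (measure_mono (Set.Ioi_subset_Ioi ht))
      rw [h_Ioi m₀, hm, h_half]
    exact h1.trans h2
  -- pointwise FTC bounds
  have ClaimR : ∀ x, x ∈ Ici m₀ → V x ≤ ∫⁻ t in Icc m₀ x, W t ∂volume := by
    intro x hx
    have h0 : φ m₀ = 0 := by
      simp only [hφ, ← hc, sub_self]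
      exact zero_pow hp0.ne'
    have hb := ftc_bound φ φ' hd m₀ x hx
    rw [h0, sub_zero] at hb
    calc V x = ENNReal.ofReal |φ x| := by simp only [hV, hφ]; rw [← abs_pow]
      _ ≤ ∫⁻ t in Icc m₀ x, ENNReal.ofReal |φ' t| ∂volume := hb
      _ = ∫⁻ t in Icc m₀ x, W t ∂volume := lintegral_congr fun t => habs t
  have ClaimL : ∀ x, x ∈ Iic m₀ → V x ≤ ∫⁻ t in Icc x m₀, W t ∂volume := by
    intro x hx
    have h0 : φ m₀ = 0 := by
      simp only [hφ, ← hc, sub_self]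
      exact zero_pow hp0.ne'
    have hb := ftc_bound φ φ' hd x m₀ hx
    rw [h0, zero_sub, abs_neg] at hb
    calc V x = ENNReal.ofReal |φ x| := by simp only [hV, hφ]; rw [← abs_pow]
      _ ≤ ∫⁻ t in Icc x m₀, ENNReal.ofReal |φ' t| ∂volume := hb
      _ = ∫⁻ t in Icc x m₀, W t ∂volume := lintegral_congr fun t => habs t
  -- density identities
  have hres : ∀ s : Set ℝ, MeasurableSet s → μ.restrict s = (volume.restrict s).withDensity g := by
    intro s hs; rw [hμg]; exact restrict_withDensity hs g
  have hIs0 : ENNReal.ofReal Is ≠ 0 := by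
    rw [Ne, ENNReal.ofReal_eq_zero, not_le]; exact hIs
  have hIsT : ENNReal.ofReal Is ≠ ⊤ := ofReal_ne_top
  have hinvT : (ENNReal.ofReal Is)⁻¹ ≠ ⊤ := by
    rw [Ne, ENNReal.inv_eq_top]; exact hIs0
  have KEYR : ∫⁻ x in Ici m₀, V x ∂μ ≤ (ENNReal.ofReal Is)⁻¹ * ∫⁻ t in Ici m₀, W t ∂μ := by
    have boundR : ∀ᵐ t ∂volume.restrict (Ici m₀), ENNReal.ofReal Is * μ (Ici t) ≤ g t := by
      rw [ae_restrict_iff' measurableSet_Ici]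
      refine hbound.mono fun t ht hmem => ?_
      rwa [h_Ici_eq, ← hminR t hmem]
    calc ∫⁻ x in Ici m₀, V x ∂μ
        = ∫⁻ x in Ici m₀, g x * V x ∂volume := by
          rw [hres _ measurableSet_Ici, lintegral_withDensity_eq_lintegral_mul _ hgm hVm]; rfl
      _ ≤ ∫⁻ x in Ici m₀, (∫⁻ t in Icc m₀ x, W t ∂volume) * g x ∂volume := by
          refine setLIntegral_mono' measurableSet_Ici fun x hx => ?_
          rw [mul_comm]
          exact mul_le_mul_left (ClaimR x hx) _
      _ = ∫⁻ t in Ici m₀, W t * (∫⁻ x in Ici t, g x ∂volume) ∂volume :=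
          tonelli_right g W hgm hWm m₀
      _ = ∫⁻ t in Ici m₀, W t * μ (Ici t) ∂volume := by
          refine lintegral_congr fun t => ?_
          rw [hμg, withDensity_apply _ measurableSet_Ici]
      _ ≤ ∫⁻ t in Ici m₀, (ENNReal.ofReal Is)⁻¹ * (W t * g t) ∂volume := by
          refine lintegral_mono_ae (boundR.mono fun t ht => ?_)
          calc W t * μ (Ici t) ≤ W t * ((ENNReal.ofReal Is)⁻¹ * g t) :=
                mul_le_mul_right (ennreal_le_inv_mul hIs0 hIsT ht) _
            _ = (ENNReal.ofReal Is)⁻¹ * (W t * g t) := by ring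
      _ = (ENNReal.ofReal Is)⁻¹ * ∫⁻ t in Ici m₀, W t * g t ∂volume :=
          lintegral_const_mul' _ _ hinvT
      _ = (ENNReal.ofReal Is)⁻¹ * ∫⁻ t in Ici m₀, W t ∂μ := by
          congr 1
          rw [hres _ measurableSet_Ici, lintegral_withDensity_eq_lintegral_mul _ hgm hWm]
          exact lintegral_congr fun t => (mul_comm _ _)
  have KEYL : ∫⁻ x in Iic m₀, V x ∂μ ≤ (ENNReal.ofReal Is)⁻¹ * ∫⁻ t in Iic m₀, W t ∂μ := by
    have boundL : ∀ᵐ t ∂volume.restrict (Iic m₀), ENNReal.ofReal Is * μ (Iic t) ≤ g t := by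
      rw [ae_restrict_iff' measurableSet_Iic]
      refine hbound.mono fun t ht hmem => ?_
      rwa [← hminL t hmem]
    calc ∫⁻ x in Iic m₀, V x ∂μ
        = ∫⁻ x in Iic m₀, g x * V x ∂volume := by
          rw [hres _ measurableSet_Iic, lintegral_withDensity_eq_lintegral_mul _ hgm hVm]; rfl
      _ ≤ ∫⁻ x in Iic m₀, (∫⁻ t in Icc x m₀, W t ∂volume) * g x ∂volume := by
          refine setLIntegral_mono' measurableSet_Iic fun x hx => ?_
          rw [mul_comm]
          exact mul_le_mul_left (ClaimL x hx) _
      _ = ∫⁻ t in Iic m₀, W t * (∫⁻ x in Iic t, g x ∂volume) ∂volume :=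
          tonelli_left g W hgm hWm m₀
      _ = ∫⁻ t in Iic m₀, W t * μ (Iic t) ∂volume := by
          refine lintegral_congr fun t => ?_
          rw [hμg, withDensity_apply _ measurableSet_Iic]
      _ ≤ ∫⁻ t in Iic m₀, (ENNReal.ofReal Is)⁻¹ * (W t * g t) ∂volume := by
          refine lintegral_mono_ae (boundL.mono fun t ht => ?_)
          calc W t * μ (Iic t) ≤ W t * ((ENNReal.ofReal Is)⁻¹ * g t) :=
                mul_le_mul_right (ennreal_le_inv_mul hIs0 hIsT ht) _
            _ = (ENNReal.ofReal Is)⁻¹ * (W t * g t) := by ring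
      _ = (ENNReal.ofReal Is)⁻¹ * ∫⁻ t in Iic m₀, W t * g t ∂volume :=
          lintegral_const_mul' _ _ hinvT
      _ = (ENNReal.ofReal Is)⁻¹ * ∫⁻ t in Iic m₀, W t ∂μ := by
          congr 1
          rw [hres _ measurableSet_Iic, lintegral_withDensity_eq_lintegral_mul _ hgm hWm]
          exact lintegral_congr fun t => (mul_comm _ _)
  -- combine both halves
  set A := ∫⁻ x, V x ∂μ with hA
  set B := ∫⁻ x, ENNReal.ofReal (|u' x|^p) ∂μ with hB
  have hIioIic : ∀ v : ℝ → ℝ≥0∞, ∫⁻ x in Iio m₀, v x ∂μ = ∫⁻ x in Iic m₀, v x ∂μ := by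
    intro v
    refine setLIntegral_congr ?_
    exact Iio_ae_eq_Iic' (hμs m₀)
  have hsplit : ∀ v : ℝ → ℝ≥0∞, (∫⁻ x, v x ∂μ)
      = ∫⁻ x in Iic m₀, v x ∂μ + ∫⁻ x in Ici m₀, v x ∂μ := by
    intro v
    rw [← hIioIic v, ← lintegral_union measurableSet_Ici
      (Set.Iio_disjoint_Ici le_rfl), Set.Iio_union_Ici, setLIntegral_univ]
  have KEY : A ≤ (ENNReal.ofReal Is)⁻¹ * ∫⁻ t, W t ∂μ := by
    rw [hA, hsplit V, hsplit W]
    calc ∫⁻ x in Iic m₀, V x ∂μ + ∫⁻ x in Ici m₀, V x ∂μ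
        ≤ (ENNReal.ofReal Is)⁻¹ * ∫⁻ t in Iic m₀, W t ∂μ
          + (ENNReal.ofReal Is)⁻¹ * ∫⁻ t in Ici m₀, W t ∂μ := add_le_add KEYL KEYR
      _ = (ENNReal.ofReal Is)⁻¹ * (∫⁻ t in Iic m₀, W t ∂μ + ∫⁻ t in Ici m₀, W t ∂μ) := by ring
  -- Hölder
  set P : ℝ := (p:ℝ)/((p:ℝ)-1) with hP
  have hconj : P.HolderConjugate (p:ℝ) := by
    rw [Real.holderConjugate_iff]
    constructor
    · rw [hP, lt_div_iff₀ (by linarith)]; linarith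
    · rw [hP]; field_simp; ring
  set v1 : ℝ → ℝ≥0∞ := fun t => ENNReal.ofReal (|u t - c|^(p-1)) with hv1
  set v2 : ℝ → ℝ≥0∞ := fun t => ENNReal.ofReal (|u' t|) with hv2
  have hv1m : Measurable v1 := ((hum.sub_const c).abs.pow_const (p-1)).ennreal_ofReal
  have hv2m : Measurable v2 := hu'm.abs.ennreal_ofReal
  have hWsplit : ∀ t, W t = ENNReal.ofReal (p:ℝ) * (v1 t * v2 t) := by
    intro t
    simp only [hW, hv1, hv2]
    rw [ENNReal.ofReal_mul (by positivity), ENNReal.ofReal_mul (by positivity), mul_assoc]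
  have hPpos : 0 < P := hconj.pos
  have hcast : ((p - 1 : ℕ) : ℝ) = (p:ℝ) - 1 := by
    rw [Nat.cast_sub (by omega), Nat.cast_one]
  have hv1P : ∀ t, v1 t ^ P = V t := by
    intro t
    simp only [hv1, hV]
    rw [ENNReal.ofReal_rpow_of_nonneg (by positivity) hPpos.le]
    congr 1
    rw [← Real.rpow_natCast |u t - c| (p-1), ← Real.rpow_mul (abs_nonneg _), hcast]
    rw [show ((p:ℝ) - 1) * P = (p:ℝ) by rw [hP, mul_comm, div_mul_cancel₀ _ (by linarith : (p:ℝ)-1 ≠ 0)]]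
    rw [Real.rpow_natCast]
  have hv2Q : ∀ t, v2 t ^ (p:ℝ) = ENNReal.ofReal (|u' t|^p) := by
    intro t
    simp only [hv2]
    rw [ENNReal.ofReal_rpow_of_nonneg (abs_nonneg _) (by positivity)]
    rw [Real.rpow_natCast]
  have hHolder := ENNReal.lintegral_mul_le_Lp_mul_Lq μ hconj hv1m.aemeasurable hv2m.aemeasurable
  have WIbound : (∫⁻ t, W t ∂μ) ≤ ENNReal.ofReal (p:ℝ) * (A^(1/P) * B^(1/(p:ℝ))) := by
    calc (∫⁻ t, W t ∂μ) = ∫⁻ t, ENNReal.ofReal (p:ℝ) * (v1 t * v2 t) ∂μ :=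
          lintegral_congr hWsplit
      _ = ENNReal.ofReal (p:ℝ) * ∫⁻ t, v1 t * v2 t ∂μ :=
          lintegral_const_mul' _ _ ofReal_ne_top
      _ ≤ ENNReal.ofReal (p:ℝ) * ((∫⁻ t, v1 t ^ P ∂μ)^(1/P) * (∫⁻ t, v2 t ^ (p:ℝ) ∂μ)^(1/(p:ℝ))) := by
          refine mul_le_mul_right ?_ _
          simpa using hHolder
      _ = ENNReal.ofReal (p:ℝ) * (A^(1/P) * B^(1/(p:ℝ))) := by
          congr 2
          · rw [hA]; exact congrArg (fun z => z ^ (1/P)) (lintegral_congr hv1P)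
          · rw [hB]; exact congrArg (fun z => z ^ (1/(p:ℝ))) (lintegral_congr hv2Q)
  have final : A ≤ (ENNReal.ofReal Is)⁻¹ * (ENNReal.ofReal (p:ℝ) * (A^(1/P) * B^(1/(p:ℝ)))) :=
    KEY.trans (mul_le_mul_right WIbound _)
  -- conclusion
  have goalA : eLpNorm (fun x => u x - c) (p : ℝ≥0∞) μ = A^(1/(p:ℝ)) := by
    rw [eLpNorm_nat μ _ p hp0]
  have goalB : eLpNorm u' (p : ℝ≥0∞) μ = B^(1/(p:ℝ)) := by
    rw [eLpNorm_nat μ u' p hp0]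
  have hcoeff : ENNReal.ofReal ((p:ℝ) * Is⁻¹) = (ENNReal.ofReal Is)⁻¹ * ENNReal.ofReal (p:ℝ) := by
    rw [ENNReal.ofReal_mul (by positivity), ENNReal.ofReal_inv_of_pos hIs, mul_comm]
  rw [goalA, goalB, hcoeff]
  by_cases hA0 : A = 0
  · rw [hA0, ENNReal.zero_rpow_of_pos (by positivity)]
    exact zero_le'
  · have hAtop : A ≠ ⊤ := by
      intro hT
      have h1 : eLpNorm (fun x => u x - c) (p : ℝ≥0∞) μ ≠ ⊤ := hh.eLpNorm_lt_top.ne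
      rw [goalA, hT, ENNReal.top_rpow_of_pos (by positivity)] at h1
      exact h1 rfl
    have hsum : 1/P + 1/(p:ℝ) = 1 := by
      have := hconj.inv_add_inv_eq_one
      simpa [one_div] using this
    have hAsplit : A = A^(1/P) * A^(1/(p:ℝ)) := by
      conv_lhs => rw [← ENNReal.rpow_one A, ← hsum, ENNReal.rpow_add _ _ hA0 hAtop]
    have hc0 : A^(1/P) ≠ 0 := by
      simp [ENNReal.rpow_eq_zero_iff, hA0, hAtop, hPpos]
    have hcT : A^(1/P) ≠ ⊤ := by
      simp [ENNReal.rpow_eq_top_iff, hA0, hAtop, hPpos, one_div, inv_pos]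
    have final2 : A^(1/P) * A^(1/(p:ℝ))
        ≤ A^(1/P) * ((ENNReal.ofReal Is)⁻¹ * ENNReal.ofReal (p:ℝ) * B^(1/(p:ℝ))) := by
      rw [← hAsplit]
      refine final.trans (le_of_eq ?_)
      ring
    rw [mul_assoc]
    exact (ENNReal.mul_le_mul_iff_right hc0 hcT).1 (by rw [← mul_assoc]; exact final2.trans (le_of_eq (by ring)))




lemma eLpNorm_nat' (μ : Measure ℝ) (v : ℝ → ℝ) (p : ℕ) (hp : 0 < p) :
    eLpNorm v p μ = (∫⁻ x, ENNReal.ofReal (|v x| ^ p) ∂μ) ^ (1/(p:ℝ)) := by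
  rw [eLpNorm_eq_lintegral_rpow_enorm_toReal (by exact_mod_cast hp.ne') (by simp)]
  congr 1
  refine lintegral_congr fun x => ?_
  rw [show ((p:ℝ≥0∞)).toReal = (p:ℝ) by simp,
    ← ofReal_norm, ENNReal.ofReal_rpow_of_nonneg (norm_nonneg _) (by positivity),
    Real.norm_eq_abs, Real.rpow_natCast]

lemma abs_pow_integrable (μ : Measure ℝ) [IsProbabilityMeasure μ] (v : ℝ → ℝ) (p : ℕ)
    (hp : 0 < p) (hv : MemLp v (p : ℝ≥0∞) μ) : Integrable (fun x => |v x|^p) μ := by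
  have h := hv.integrable_norm_rpow (by exact_mod_cast hp.ne') (by simp)
  refine (integrable_congr ?_).1 h
  refine ae_of_all _ fun x => ?_
  simp only [Real.norm_eq_abs]
  rw [show ((p:ℝ≥0∞)).toReal = (p:ℝ) by simp, Real.rpow_natCast]

lemma reduction (μ : Measure ℝ) [IsProbabilityMeasure μ] (p : ℕ) (hodd : Odd p) (hp0 : 0 < p)
    (u : ℝ → ℝ) (hucont : Continuous u) (hu : MemLp u (p : ℝ≥0∞) μ)
    (hmoment : ∫ x, (u x)^p ∂μ = 0) (c : ℝ) (hc : MemLp (fun x => u x - c) (p : ℝ≥0∞) μ) :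
    eLpNorm u (p : ℝ≥0∞) μ ≤ 2 * eLpNorm (fun x => u x - c) (p : ℝ≥0∞) μ := by
  have hum : Measurable u := hucont.measurable
  have Habs : Integrable (fun x => |u x|^p) μ := abs_pow_integrable μ u p hp0 hu
  have Hh : Integrable (fun x => |u x - c|^p) μ := abs_pow_integrable μ _ p hp0 hc
  have Hupow : Integrable (fun x => (u x)^p) μ := by
    refine Habs.mono' ((hum.pow_const p).aestronglyMeasurable) (ae_of_all _ fun x => ?_)
    rw [Real.norm_eq_abs, abs_pow]
  set Ps : Set ℝ := {x | 0 ≤ u x} with hPs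
  have hPsm : MeasurableSet Ps := measurableSet_le measurable_const hum
  have hsplit : (∫ x in Ps, (u x)^p ∂μ) + (∫ x in Psᶜ, (u x)^p ∂μ) = 0 := by
    rw [integral_add_compl hPsm Hupow, hmoment]
  have I1 : (∫ x in Ps, (u x)^p ∂μ) = ∫ x in Ps, |u x|^p ∂μ := by
    refine setIntegral_congr_fun hPsm fun x hx => ?_
    rw [abs_of_nonneg hx]
  have I2 : (∫ x in Psᶜ, (u x)^p ∂μ) = - ∫ x in Psᶜ, |u x|^p ∂μ := by
    rw [← integral_neg]
    refine setIntegral_congr_fun hPsm.compl fun x hx => ?_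
    have hx' : u x < 0 := not_le.1 hx
    rw [abs_of_neg hx', hodd.neg_pow]
    ring
  have hEq : (∫ x in Ps, |u x|^p ∂μ) = ∫ x in Psᶜ, |u x|^p ∂μ := by
    rw [I1, I2] at hsplit; linarith
  have htot : (∫ x, |u x|^p ∂μ)
      = (∫ x in Ps, |u x|^p ∂μ) + (∫ x in Psᶜ, |u x|^p ∂μ) := by
    rw [integral_add_compl hPsm Habs]
  have hmain : (∫ x, |u x|^p ∂μ) ≤ 2 * ∫ x, |u x - c|^p ∂μ := by
    rcases le_or_gt 0 c with hc0 | hc0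
    · have hside : (∫ x in Psᶜ, |u x|^p ∂μ) ≤ ∫ x in Psᶜ, |u x - c|^p ∂μ := by
        refine setIntegral_mono_on Habs.integrableOn Hh.integrableOn hPsm.compl fun x hx => ?_
        have hx' : u x < 0 := not_le.1 hx
        refine pow_le_pow_left₀ (abs_nonneg _) ?_ p
        rw [abs_of_neg hx', abs_of_neg (by linarith : u x - c < 0)]
        linarith
      have hfull : (∫ x in Psᶜ, |u x - c|^p ∂μ) ≤ ∫ x, |u x - c|^p ∂μ :=
        setIntegral_le_integral Hh (ae_of_all _ fun x => by positivity)
      rw [htot, hEq]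
      linarith
    · have hside : (∫ x in Ps, |u x|^p ∂μ) ≤ ∫ x in Ps, |u x - c|^p ∂μ := by
        refine setIntegral_mono_on Habs.integrableOn Hh.integrableOn hPsm fun x hx => ?_
        have hx' : (0:ℝ) ≤ u x := hx
        refine pow_le_pow_left₀ (abs_nonneg _) ?_ p
        rw [abs_of_nonneg hx', abs_of_nonneg (by linarith : (0:ℝ) ≤ u x - c)]
        linarith
      have hfull : (∫ x in Ps, |u x - c|^p ∂μ) ≤ ∫ x, |u x - c|^p ∂μ :=
        setIntegral_le_integral Hh (ae_of_all _ fun x => by positivity)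
      rw [htot, ← hEq]
      linarith
  -- convert to eLpNorm
  rw [eLpNorm_nat' μ u p hp0, eLpNorm_nat' μ _ p hp0]
  have hlhs : (∫⁻ x, ENNReal.ofReal (|u x|^p) ∂μ) = ENNReal.ofReal (∫ x, |u x|^p ∂μ) :=
    (ofReal_integral_eq_lintegral_ofReal Habs (ae_of_all _ fun x => by positivity)).symm
  have hrhs : (∫⁻ x, ENNReal.ofReal (|u x - c|^p) ∂μ) = ENNReal.ofReal (∫ x, |u x - c|^p ∂μ) :=
    (ofReal_integral_eq_lintegral_ofReal Hh (ae_of_all _ fun x => by positivity)).symm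
  rw [hlhs, hrhs]
  calc (ENNReal.ofReal (∫ x, |u x|^p ∂μ)) ^ (1/(p:ℝ))
      ≤ (ENNReal.ofReal (2 * ∫ x, |u x - c|^p ∂μ)) ^ (1/(p:ℝ)) := by
        exact ENNReal.rpow_le_rpow (ENNReal.ofReal_le_ofReal hmain) (by positivity)
    _ = ((2:ℝ≥0∞) * ENNReal.ofReal (∫ x, |u x - c|^p ∂μ)) ^ (1/(p:ℝ)) := by
        rw [ENNReal.ofReal_mul (by norm_num), ENNReal.ofReal_ofNat]
    _ = (2:ℝ≥0∞)^(1/(p:ℝ)) * (ENNReal.ofReal (∫ x, |u x - c|^p ∂μ)) ^ (1/(p:ℝ)) :=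
        ENNReal.mul_rpow_of_nonneg _ _ (by positivity)
    _ ≤ 2 * (ENNReal.ofReal (∫ x, |u x - c|^p ∂μ)) ^ (1/(p:ℝ)) := by
        refine mul_le_mul_left ?_ _
        calc (2:ℝ≥0∞)^(1/(p:ℝ)) ≤ (2:ℝ≥0∞)^(1:ℝ) := by
              refine ENNReal.rpow_le_rpow_of_exponent_le (by norm_num) ?_
              rw [div_le_one (by exact_mod_cast hp0)]
              exact_mod_cast hp0
          _ = 2 := ENNReal.rpow_one 2


/-- `L_p`-Poincaré inequality for odd `p` and `E[u^p] = 0`: for a probability measure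
`μ` on `ℝ` with positive density and finite (positive) isoperimetric constant, `p` an
odd integer `≥ 3`, `u ∈ L_p(μ)` absolutely continuous with `E[u^p] = 0`:
`‖u‖_p ≤ 2p · Is(μ)⁻¹ · ‖u'‖_p`. -/
theorem Lp_poincare_odd (f : ℝ → ℝ) (hfpos : ∀ x, 0 < f x)
    (μ : Measure ℝ) (hμ : μ = volume.withDensity fun x => ENNReal.ofReal (f x))
    [IsProbabilityMeasure μ]
    (hIs : 0 < isopConst μ f)
    (p : ℕ) (hodd : Odd p) (hp3 : 3 ≤ p)
    (u u' : ℝ → ℝ) (hud : ∀ x, HasDerivAt u (u' x) x)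
    (hu : MemLp u (p : ℝ≥0∞) μ)
    (hmoment : ∫ x, (u x) ^ p ∂μ = 0) :
    eLpNorm u (p : ℝ≥0∞) μ
      ≤ ENNReal.ofReal (2 * (p : ℝ) * (isopConst μ f)⁻¹) * eLpNorm u' (p : ℝ≥0∞) μ := by
  have hp0 : 0 < p := by omega
  set Is := isopConst μ f with hIsdef
  -- absolute continuity and atoms
  have hac : μ ≪ (volume : Measure ℝ) := by
    refine Measure.AbsolutelyContinuous.mk fun s hs hs0 => ?_
    rw [hμ, withDensity_apply _ hs, Measure.restrict_eq_zero.2 hs0, lintegral_zero_measure]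
  have hμs : ∀ t : ℝ, μ {t} = 0 := fun t => hac (measure_singleton t)
  -- cdf basics
  set F : ℝ → ℝ := fun x => (μ (Iic x)).toReal with hF
  have hFmono : Monotone F := fun a b hab =>
    ENNReal.toReal_mono (measure_ne_top μ _) (measure_mono (Iic_subset_Iic.2 hab))
  have hFm : Measurable F := hFmono.measurable
  have hF0 : ∀ x, 0 ≤ F x := fun x => ENNReal.toReal_nonneg
  have hF1 : ∀ x, F x ≤ 1 := by
    intro x
    rw [hF]
    have : μ (Iic x) ≤ 1 := prob_le_one
    calc (μ (Iic x)).toReal ≤ (1 : ℝ≥0∞).toReal :=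
      ENNReal.toReal_mono (by simp) this
      _ = 1 := by simp
  -- essInf bound
  set S : Set ℝ := {x : ℝ | 0 < cdf μ x ∧ cdf μ x < 1} with hS
  have hcdfF : cdf μ = F := rfl
  have hSm : MeasurableSet S := by
    have : S = F ⁻¹' (Ioo 0 1) := by
      ext x; simp [hS, cdf, hF, mem_Ioo]
    rw [this]
    exact hFm measurableSet_Ioo
  set q : ℝ → ℝ := fun x => f x / min (cdf μ x) (1 - cdf μ x) with hq
  have hq0 : ∀ x, 0 ≤ q x := by
    intro x
    refine div_nonneg (hfpos x).le (le_min ?_ ?_)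
    · exact hF0 x
    · show (0:ℝ) ≤ 1 - F x
      linarith [hF1 x]
  have hbdd : IsBoundedUnder (· ≥ ·) (ae (volume.restrict S)) q :=
    ⟨0, eventually_map.mpr (ae_of_all _ fun x => hq0 x)⟩
  have hae : ∀ᵐ x ∂(volume.restrict S), Is ≤ q x := ae_essInf_le hbdd
  have hb1 : ∀ᵐ x ∂(volume : Measure ℝ), Is * min (cdf μ x) (1 - cdf μ x) ≤ f x := by
    have h' := (ae_restrict_iff' hSm).1 hae
    refine h'.mono fun x hx => ?_
    have c0 : (0:ℝ) ≤ cdf μ x := hF0 x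
    have c1 : cdf μ x ≤ 1 := hF1 x
    by_cases hxS : x ∈ S
    · obtain ⟨h1, h2⟩ := hxS
      have hmin : 0 < min (cdf μ x) (1 - cdf μ x) := lt_min h1 (by linarith)
      have hxq := hx ⟨h1, h2⟩
      rw [hq] at hxq
      calc Is * min (cdf μ x) (1 - cdf μ x)
          ≤ (f x / min (cdf μ x) (1 - cdf μ x)) * min (cdf μ x) (1 - cdf μ x) :=
            mul_le_mul_of_nonneg_right hxq hmin.le
        _ = f x := div_mul_cancel₀ _ hmin.ne'
    · have hmin : min (cdf μ x) (1 - cdf μ x) = 0 := by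
        rw [hS, mem_setOf_eq] at hxS
        push_neg at hxS
        rcases lt_or_ge 0 (cdf μ x) with h1 | h1
        · have h2 : cdf μ x = 1 := le_antisymm c1 (hxS h1)
          rw [min_eq_right (by linarith), h2]; ring
        · have h2 : cdf μ x = 0 := le_antisymm h1 c0
          rw [min_eq_left (by linarith), h2]
      rw [hmin, mul_zero]
      exact (hfpos x).le
  -- Radon–Nikodym density
  set g : ℝ → ℝ≥0∞ := μ.rnDeriv volume with hg
  have hgm : Measurable g := Measure.measurable_rnDeriv μ volume
  have hμg : μ = volume.withDensity g := (Measure.withDensity_rnDeriv_eq μ volume hac).symm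
  set M : ℝ → ℝ≥0∞ := fun x => ENNReal.ofReal Is * min (μ (Iic x)) (μ (Ioi x)) with hM
  have hIicm : Measurable fun x : ℝ => μ (Iic x) :=
    Monotone.measurable (fun a b hab => measure_mono (Iic_subset_Iic.2 hab))
  have hIoim : Measurable fun x : ℝ => μ (Ioi x) :=
    Antitone.measurable (fun a b hab => measure_mono (Ioi_subset_Ioi hab))
  have hMm : Measurable M := measurable_const.mul (hIicm.min hIoim)
  have hofmono : Monotone ENNReal.ofReal := fun a b h => ENNReal.ofReal_le_ofReal h
  have hMpt : ∀ x, M x = ENNReal.ofReal (Is * min (cdf μ x) (1 - cdf μ x)) := by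
    intro x
    have hIic : μ (Iic x) = ENNReal.ofReal (cdf μ x) :=
      (ENNReal.ofReal_toReal (measure_ne_top μ _)).symm
    have hIoi : μ (Ioi x) = ENNReal.ofReal (1 - cdf μ x) := by
      rw [← Set.compl_Iic, measure_compl measurableSet_Iic (measure_ne_top μ _), measure_univ,
        hIic, ← ENNReal.ofReal_one, ← ENNReal.ofReal_sub _ (show (0:ℝ) ≤ cdf μ x from hF0 x)]
    simp only [hM]
    rw [hIic, hIoi, ← hofmono.map_min, ← ENNReal.ofReal_mul hIs.le]
  have hb2 : ∀ᵐ x ∂(volume : Measure ℝ), M x ≤ ENNReal.ofReal (f x) := by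
    refine hb1.mono fun x hx => ?_
    rw [hMpt x]
    exact ENNReal.ofReal_le_ofReal hx
  have hbg : ∀ᵐ x ∂(volume : Measure ℝ), M x ≤ g x := by
    refine ae_le_of_forall_setLIntegral_le_of_sigmaFinite hMm fun s hs hfin => ?_
    calc ∫⁻ x in s, M x ∂volume ≤ ∫⁻ x in s, ENNReal.ofReal (f x) ∂volume :=
          lintegral_mono_ae (ae_restrict_of_ae hb2)
      _ = μ s := by rw [hμ, withDensity_apply _ hs]
      _ = ∫⁻ x in s, g x ∂volume := by rw [hμg, withDensity_apply _ hs]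
  have hbound : ∀ᵐ x ∂(volume : Measure ℝ),
      ENNReal.ofReal Is * min (μ (Iic x)) (μ (Ioi x)) ≤ g x := by
    simpa only [hM] using hbg
  -- median point
  have hcont : Continuous F := cdf_cont μ hμs
  obtain ⟨m₀, hmed⟩ := exists_median μ hcont
  -- assemble
  have hh : MemLp (fun x => u x - u m₀) (p : ℝ≥0∞) μ := hu.sub (memLp_const (u m₀))
  have core := core_lemma μ g hgm hμg Is hIs hbound p hp3 m₀ hmed u u' hud hh
  have hucont : Continuous u := continuous_iff_continuousAt.2 fun x => (hud x).continuousAt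
  have red := reduction μ p hodd hp0 u hucont hu hmoment (u m₀) hh
  calc eLpNorm u (p : ℝ≥0∞) μ
      ≤ 2 * eLpNorm (fun x => u x - u m₀) (p : ℝ≥0∞) μ := red
    _ ≤ 2 * (ENNReal.ofReal ((p:ℝ) * Is⁻¹) * eLpNorm u' (p : ℝ≥0∞) μ) := mul_le_mul_right core _
    _ = ENNReal.ofReal (2 * (p:ℝ) * Is⁻¹) * eLpNorm u' (p : ℝ≥0∞) μ := by
        rw [← mul_assoc]
        congr 1
        rw [show (2:ℝ≥0∞) = ENNReal.ofReal 2 by norm_num,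
          ← ENNReal.ofReal_mul (by norm_num), mul_assoc]
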